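/- Let T be a countable type (the hyperparameter space), q : T → ℝ a prior with q(t) ≥ 0 for all t and ∑_t q(t) = 1, and α, θ : T → ℝ with 0 ≤ α(t) < 1 and θ(t) > −α(t) for all t. Let k ≥ 1 and let n_1, …, n_k be positive integers with n_1 + ⋯ + n_k = n, and set L(t) := ℙ_{n+1}^{α(t),θ(t)}(n_1,…,n_k,1). Assume ∑_t q(t)·L(t) > 0 (and the relevant sums converge). Then the Bayesian likelihood ratio for the rare type match, namely (∑_t q(t)·ℙ_{n+1}^{α(t),θ(t)}(n_1,…,n_k,1)) / (∑_t q(t)·ℙ_{n+2}^{α(t),θ(t)}(n_1,…,n_k,2)), equals 1 / E[ (1 − A)/(n + 1 + Θ) | Π_{[n+1]} ], where the posterior expectation is E[ (1−A)/(n+1+Θ) | Π_{[n+1]} ] := (∑_t q(t)·L(t)·(1−α(t))/(n+1+θ(t))) / (∑_t q(t)·L(t)). -/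

import Mathlib

/-- Generalized rising factorial `[x]_{a;b} := ∏_{i=0}^{a-1} (x + i·b)`, with `[x]_{0;b} = 1`. -/
noncomputable def risingFac (x b : ℝ) (a : ℕ) : ℝ :=
  ∏ i ∈ Finset.range a, (x + (i : ℝ) * b)

/-- The Pitman sampling formula `ℙ_n^{α,θ}(n_1,…,n_k)` for a composition
`ns : Fin k → ℕ` of `n = ∑ i, ns i`:
`([θ+α]_{k−1;α} / [θ+1]_{n−1;1}) · ∏_{i=1}^k [1−α]_{n_i−1;1}`. -/
noncomputable def pitmanP (α θ : ℝ) {k : ℕ} (ns : Fin k → ℕ) : ℝ :=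
  risingFac (θ + α) α (k - 1) / risingFac (θ + 1) 1 ((∑ i, ns i) - 1) *
    ∏ i, risingFac (1 - α) 1 (ns i - 1)

/-- **The Bayesian likelihood ratio for the rare type match with a hyperprior.**
Let `q` be a prior on a countable hyperparameter space `T`, with parameters
`α t, θ t` satisfying `0 ≤ α t < 1`, `θ t > −α t`.  With
`L t := ℙ_{n+1}^{α t, θ t}(n_1,…,n_k,1)` (the marginal likelihood of the reduced
data under the prosecution hypothesis) and assuming the relevant sums converge
and `∑' t, q t * L t > 0`, the Bayesian likelihood ratio
`(∑' t, q t • ℙ_{n+1}(…,1)) / (∑' t, q t • ℙ_{n+2}(…,2))` equals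
`1 / E[(1−A)/(n+1+Θ) ∣ Π_{[n+1]}]`, where the posterior expectation is
`(∑' t, q t * L t * (1−α t)/(n+1+θ t)) / (∑' t, q t * L t)`. -/
lemma key (α θ : ℝ) (hα1 : α < 1) (hθ : -α < θ) {k : ℕ} (ns : Fin k → ℕ)
    (hns : ∀ i, 0 < ns i) (n : ℕ) (hn : ∑ i, ns i = n) :
    pitmanP α θ (Fin.snoc ns 2) = pitmanP α θ (Fin.snoc ns 1) * ((1 - α) / (n + 1 + θ)) := by
  have hs1 : (∑ i, (Fin.snoc ns 1 : Fin (k+1) → ℕ) i) = n + 1 := by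
    rw [Fin.sum_snoc, hn]
  have hs2 : (∑ i, (Fin.snoc ns 2 : Fin (k+1) → ℕ) i) = n + 2 := by
    rw [Fin.sum_snoc, hn]
  have hne : (θ + 1 + n : ℝ) ≠ 0 := by nlinarith
  unfold pitmanP
  rw [hs1, hs2]
  simp only [Nat.add_sub_cancel, Nat.add_succ_sub_one]
  have hprod : ∀ c : ℕ, ∏ i, risingFac (1 - α) 1 ((Fin.snoc ns c : Fin (k+1) → ℕ) i - 1)
      = (∏ i, risingFac (1 - α) 1 (ns i - 1)) * risingFac (1 - α) 1 (c - 1) := by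
    intro c
    rw [Fin.prod_univ_castSucc]
    simp [Fin.snoc_castSucc, Fin.snoc_last]
  have hr1 : risingFac (1 - α) 1 0 = 1 := by simp [risingFac]
  have hr2 : risingFac (1 - α) 1 1 = 1 - α := by simp [risingFac]
  have hrn : risingFac (θ + 1) 1 (n + 1) = risingFac (θ + 1) 1 n * (θ + 1 + n) := by
    simp [risingFac, Finset.prod_range_succ]
  rw [hprod 1, hprod 2, hr1, hr2, hrn]
  have hR : risingFac (θ + 1) 1 n ≠ 0 := Finset.prod_ne_zero_iff.mpr fun i _ => ne_of_gt (by have : (0:ℝ) ≤ i := Nat.cast_nonneg i; linarith)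
  have hne' : (n + 1 + θ : ℝ) ≠ 0 := by linarith [hne]
  field_simp
  ring


theorem bayesian_rare_type_LR {T : Type*} [Countable T]
    (q : T → ℝ) (hq0 : ∀ t, 0 ≤ q t) (hq1 : ∑' t, q t = 1)
    (α θ : T → ℝ) (hα0 : ∀ t, 0 ≤ α t) (hα1 : ∀ t, α t < 1) (hθ : ∀ t, -α t < θ t)
    (k : ℕ) (hk : 1 ≤ k) (ns : Fin k → ℕ) (hns : ∀ i, 0 < ns i)
    (n : ℕ) (hn : ∑ i, ns i = n)
    (L : T → ℝ) (hL : ∀ t, L t = pitmanP (α t) (θ t) (Fin.snoc ns 1))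
    (hsum1 : Summable (fun t => q t * L t))
    (hsum2 : Summable (fun t => q t * pitmanP (α t) (θ t) (Fin.snoc ns 2)))
    (hsum3 : Summable (fun t => q t * L t * ((1 - α t) / (n + 1 + θ t))))
    (hpos : 0 < ∑' t, q t * L t) :
    (∑' t, q t * pitmanP (α t) (θ t) (Fin.snoc ns 1)) /
        (∑' t, q t * pitmanP (α t) (θ t) (Fin.snoc ns 2))
      = 1 / ((∑' t, q t * L t * ((1 - α t) / (n + 1 + θ t))) / (∑' t, q t * L t)) := by
  have h1 : (∑' t, q t * pitmanP (α t) (θ t) (Fin.snoc ns 1)) = ∑' t, q t * L t :=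
    tsum_congr fun t => by rw [hL t]
  have h2 : (∑' t, q t * pitmanP (α t) (θ t) (Fin.snoc ns 2))
      = ∑' t, q t * L t * ((1 - α t) / (n + 1 + θ t)) :=
    tsum_congr fun t => by
      rw [hL t, key (α t) (θ t) (hα1 t) (hθ t) ns hns n hn, mul_assoc]
  rw [h1, h2, one_div_div]
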